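/- Let (E, d) be a metric space, let d' be a second pseudo-metric on a subset S ⊆ E with d ≤ d' on S × S, and let f : [0,1] → S be a continuous path. Suppose there exists ε > 0 such that for all r, r' ∈ [0,1] with |r − r'| < ε one has d(f(r), f(r')) = d'(f(r), f(r')). Then the lengths of f with respect to d and d' coincide: length_d(f) = length_{d'}(f). -/

import Mathlib

/-- The length of a path `f : [0,1] → E` with respect to a pseudo-metric `δ`:
the supremum over finite partitions `0 = r₀ < … < r_k = 1` of `Σ δ(f(r_{i-1}), f(r_i))`. -/
noncomputable def pathLength {E : Type*} (δ : E → E → ℝ) (f : ℝ → E) : ℝ :=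
  sSup { L : ℝ | ∃ (k : ℕ) (r : Fin (k + 1) → ℝ), Monotone r ∧
    (∀ i, r i ∈ Set.Icc (0:ℝ) 1) ∧ r 0 = 0 ∧ r (Fin.last k) = 1 ∧
    L = ∑ i : Fin k, δ (f (r i.castSucc)) (f (r i.succ)) }


open Finset

section aux

variable {E : Type*}

/-- Chain triangle inequality along consecutive points. -/
lemma chain_tri (δ : E → E → ℝ) (f : ℝ → E)
    (htri : ∀ x ∈ Set.Icc (0:ℝ) 1, ∀ y ∈ Set.Icc (0:ℝ) 1, ∀ z ∈ Set.Icc (0:ℝ) 1,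
      δ (f x) (f z) ≤ δ (f x) (f y) + δ (f y) (f z))
    (g : ℕ → ℝ) (hg : ∀ t, g t ∈ Set.Icc (0:ℝ) 1) :
    ∀ n, 1 ≤ n → ∀ a, δ (f (g a)) (f (g (a + n))) ≤
      ∑ j ∈ range n, δ (f (g (a + j))) (f (g (a + j + 1))) := by
  intro n
  induction n with
  | zero => omega
  | succ n ih =>
    intro _ a
    rcases Nat.eq_zero_or_pos n with rfl | hn
    · simp
    · have hn : 1 ≤ n := hn
      rw [Finset.sum_range_succ]
      calc δ (f (g a)) (f (g (a + (n+1))))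
          ≤ δ (f (g a)) (f (g (a + n))) + δ (f (g (a + n))) (f (g (a + n + 1))) := by
            have := htri (g a) (hg a) (g (a+n)) (hg _) (g (a + (n+1))) (hg _)
            simpa [show a + (n+1) = a + n + 1 by omega] using this
        _ ≤ (∑ j ∈ range n, δ (f (g (a + j))) (f (g (a + j + 1))))
              + δ (f (g (a + n))) (f (g (a + n + 1))) := by
            exact add_le_add (ih hn a) le_rfl
end aux

section refine
variable {E : Type*}

lemma refine_partition (δ : E → E → ℝ) (f : ℝ → E)
    (htri : ∀ x ∈ Set.Icc (0:ℝ) 1, ∀ y ∈ Set.Icc (0:ℝ) 1, ∀ z ∈ Set.Icc (0:ℝ) 1,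
      δ (f x) (f z) ≤ δ (f x) (f y) + δ (f y) (f z))
    (ε : ℝ) (hε : 0 < ε) (k : ℕ) (r : Fin (k+1) → ℝ) (hmono : Monotone r)
    (hIcc : ∀ i, r i ∈ Set.Icc (0:ℝ) 1) (h0 : r 0 = 0) (h1 : r (Fin.last k) = 1) :
    ∃ (k' : ℕ) (s : Fin (k'+1) → ℝ), Monotone s ∧ (∀ i, s i ∈ Set.Icc (0:ℝ) 1) ∧
      s 0 = 0 ∧ s (Fin.last k') = 1 ∧ (∀ i : Fin k', |s i.castSucc - s i.succ| < ε) ∧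
      ∑ i : Fin k, δ (f (r i.castSucc)) (f (r i.succ)) ≤
        ∑ i : Fin k', δ (f (s i.castSucc)) (f (s i.succ)) := by
  obtain ⟨N, hN⟩ : ∃ N : ℕ, 1 / ((N:ℝ) + 1) < ε := exists_nat_one_div_lt hε
  set M := N + 1 with hM
  have hM0 : 0 < M := Nat.succ_pos N
  have hMR : (0:ℝ) < M := by exact_mod_cast hM0
  have hMε : 1 / (M:ℝ) < ε := by exact_mod_cast hN
  -- extend r to ℕ
  set R : ℕ → ℝ := fun i => r ⟨min i k, by omega⟩ with hR
  have hRmono : Monotone R := by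
    intro i j hij
    exact hmono (by simp [Fin.le_def]; omega)
  have hRIcc : ∀ i, R i ∈ Set.Icc (0:ℝ) 1 := fun i => hIcc _
  have hR0 : R 0 = 0 := by simpa [hR] using h0
  have hRtop : ∀ i, k ≤ i → R i = 1 := by
    intro i hi
    have : (⟨min i k, by omega⟩ : Fin (k+1)) = Fin.last k :=
      Fin.ext (by simpa [Fin.last] using min_eq_right hi)
    rw [hR]; simp only []; rw [this]; exact h1
  have hRk : ∀ i, ∀ _ : i ≤ k, R i = r ⟨i, by omega⟩ := by
    intro i hi; simp [hR, Nat.min_eq_left hi]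
  -- the refined partition
  set g : ℕ → ℝ := fun t => R (t/M) + ((t % M : ℕ) : ℝ)/M * (R (t/M + 1) - R (t/M)) with hg
  have hgval : ∀ t, g (t+1) = R (t/M) + (((t % M : ℕ) : ℝ) + 1)/M * (R (t/M + 1) - R (t/M)) := by
    intro t
    have hdm := Nat.div_add_mod t M
    set q := t / M
    set p := t % M
    have hp : p < M := Nat.mod_lt t hM0
    rcases Nat.lt_or_ge (p+1) M with h | h
    · have h1' : (t+1)/M = q := by
        rw [show t + 1 = M * q + (p+1) by omega, Nat.mul_add_div hM0, Nat.div_eq_of_lt h]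
        omega
      have h2' : (t+1)%M = p+1 := by
        rw [show t + 1 = M * q + (p+1) by omega, Nat.mul_add_mod, Nat.mod_eq_of_lt h]
      rw [hg]; simp only [h1', h2']
      push_cast
      ring
    · have hpM : p + 1 = M := by omega
      have h1' : (t+1)/M = q + 1 := by
        rw [show t + 1 = M * (q+1) by rw [Nat.mul_add, Nat.mul_one]; omega, Nat.mul_div_cancel_left _ hM0]
      have h2' : (t+1)%M = 0 := by
        rw [show t + 1 = M * (q+1) by rw [Nat.mul_add, Nat.mul_one]; omega, Nat.mul_mod_right]
      have hpcast : ((p:ℝ) + 1) = (M:ℝ) := by exact_mod_cast congrArg (Nat.cast : ℕ → ℝ) hpM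
      have hdiv : (((t % M : ℕ) : ℝ) + 1)/M = 1 := by
        show ((p:ℝ) + 1)/M = 1
        rw [hpcast]; exact div_self (ne_of_gt hMR)
      rw [hg, hdiv]; simp only [h1', h2']
      push_cast
      ring
  have hgstep : ∀ t, g (t+1) - g t = (R (t/M + 1) - R (t/M))/M := by
    intro t
    rw [hgval t, hg]
    simp only []
    field_simp
    ring
  have hΔnn : ∀ q : ℕ, 0 ≤ R (q+1) - R q := fun q => sub_nonneg.mpr (hRmono (Nat.le_succ q))
  have hΔle : ∀ q : ℕ, R (q+1) - R q ≤ 1 := by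
    intro q
    have := (hRIcc (q+1)).2
    have := (hRIcc q).1
    linarith
  have hgstep_nn : ∀ t, 0 ≤ g (t+1) - g t := by
    intro t; rw [hgstep]; exact div_nonneg (hΔnn _) hMR.le
  have hgmono : Monotone g := monotone_nat_of_le_succ (fun t => by linarith [hgstep_nn t])
  have hgstep_lt : ∀ t, g (t+1) - g t < ε := by
    intro t
    rw [hgstep]
    calc (R (t/M + 1) - R (t/M))/M ≤ 1/(M:ℝ) := by gcongr; exact hΔle _
      _ < ε := hMε
  have hgIcc : ∀ t, g t ∈ Set.Icc (0:ℝ) 1 := by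
    intro t
    have hp : ((t % M : ℕ) : ℝ)/M ≤ 1 := by
      rw [div_le_one hMR]
      exact_mod_cast (Nat.mod_lt t hM0).le
    have hp0 : 0 ≤ ((t % M : ℕ) : ℝ)/M := by positivity
    have hgt : g t = R (t/M) + ((t % M : ℕ) : ℝ)/M * (R (t/M + 1) - R (t/M)) := rfl
    constructor
    · rw [hgt]
      nlinarith [hΔnn (t/M), (hRIcc (t/M)).1]
    · rw [hgt]
      nlinarith [hΔnn (t/M), (hRIcc (t/M + 1)).2]
  have hgmul : ∀ i : ℕ, g (M * i) = R i := by
    intro i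
    rw [hg]; simp [Nat.mul_div_cancel_left _ hM0, Nat.mul_mod_right]
  have hg0 : g 0 = 0 := by
    rw [hg]; simp [hR0]
  -- sum inequality by induction
  have key : ∀ m : ℕ, ∑ i ∈ range m, δ (f (R i)) (f (R (i+1))) ≤
      ∑ t ∈ range (m * M), δ (f (g t)) (f (g (t+1))) := by
    intro m
    induction m with
    | zero => simp
    | succ m ih =>
      rw [Finset.sum_range_succ, show (m+1) * M = m * M + M by ring, Finset.sum_range_add]
      apply add_le_add ih
      have := chain_tri δ f htri g hgIcc M hM0 (m * M)
      calc δ (f (R m)) (f (R (m+1)))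
          = δ (f (g (m * M))) (f (g (m * M + M))) := by
            rw [show m * M + M = M * (m+1) by ring, show m * M = M * m by ring,
              hgmul, hgmul]
        _ ≤ ∑ j ∈ range M, δ (f (g (m * M + j))) (f (g (m * M + j + 1))) := this
  refine ⟨k * M, fun t => g t, ?_, fun t => hgIcc _, ?_, ?_, ?_, ?_⟩
  · intro a b hab
    exact hgmono (by exact_mod_cast hab)
  · simpa using hg0
  · simp only [Fin.val_last]
    rw [show ((k * M : ℕ) : ℕ) = M * k by ring, hgmul k]
    exact hRtop k le_rfl
  · intro i
    have h := hgstep_lt (i : ℕ)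
    have h2 := hgstep_nn (i : ℕ)
    have : |g (i : ℕ) - g ((i:ℕ)+1)| < ε := by
      rw [abs_sub_comm, abs_of_nonneg h2]; exact h
    simpa [Fin.coe_castSucc, Fin.val_succ] using this
  · have lhs_eq : ∑ i : Fin k, δ (f (r i.castSucc)) (f (r i.succ)) =
        ∑ i ∈ range k, δ (f (R i)) (f (R (i+1))) := by
      rw [← Fin.sum_univ_eq_sum_range (fun i => δ (f (R i)) (f (R (i+1)))) k]
      refine Finset.sum_congr rfl (fun i _ => ?_)
      have e1 : r i.castSucc = R (i:ℕ) := by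
        rw [hRk (i:ℕ) i.isLt.le]
        exact congrArg r (Fin.ext rfl)
      have e2 : r i.succ = R ((i:ℕ)+1) := by
        rw [hRk ((i:ℕ)+1) i.isLt]
        exact congrArg r (Fin.ext rfl)
      rw [e1, e2]
    have rhs_eq : ∑ i : Fin (k * M), δ (f (g i.castSucc)) (f (g i.succ)) =
        ∑ t ∈ range (k * M), δ (f (g t)) (f (g (t+1))) := by
      rw [← Fin.sum_univ_eq_sum_range (fun t => δ (f (g t)) (f (g (t+1)))) (k * M)]
      apply Finset.sum_congr rfl
      intro i _
      simp [Fin.coe_castSucc, Fin.val_succ]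
    rw [lhs_eq]
    calc ∑ i ∈ range k, δ (f (R i)) (f (R (i+1)))
        ≤ ∑ t ∈ range (k * M), δ (f (g t)) (f (g (t+1))) := key k
      _ = _ := rhs_eq.symm
end refine

theorem length_eq_of_locally_eq' {E : Type*} [MetricSpace E] (S : Set E)
    (d' : E → E → ℝ)
    (hnonneg : ∀ x ∈ S, ∀ y ∈ S, 0 ≤ d' x y)
    (hsymm : ∀ x ∈ S, ∀ y ∈ S, d' x y = d' y x)
    (htri : ∀ x ∈ S, ∀ y ∈ S, ∀ z ∈ S, d' x z ≤ d' x y + d' y z)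
    (hle : ∀ x ∈ S, ∀ y ∈ S, dist x y ≤ d' x y)
    (f : ℝ → E) (hf : ContinuousOn f (Set.Icc 0 1))
    (hfS : ∀ r ∈ Set.Icc (0:ℝ) 1, f r ∈ S)
    (ε : ℝ) (hε : 0 < ε)
    (hloc : ∀ r ∈ Set.Icc (0:ℝ) 1, ∀ r' ∈ Set.Icc (0:ℝ) 1, |r - r'| < ε →
      dist (f r) (f r') = d' (f r) (f r')) :
    sSup { L : ℝ | ∃ (k : ℕ) (r : Fin (k + 1) → ℝ), Monotone r ∧
    (∀ i, r i ∈ Set.Icc (0:ℝ) 1) ∧ r 0 = 0 ∧ r (Fin.last k) = 1 ∧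
    L = ∑ i : Fin k, dist (f (r i.castSucc)) (f (r i.succ)) } =
    sSup { L : ℝ | ∃ (k : ℕ) (r : Fin (k + 1) → ℝ), Monotone r ∧
    (∀ i, r i ∈ Set.Icc (0:ℝ) 1) ∧ r 0 = 0 ∧ r (Fin.last k) = 1 ∧
    L = ∑ i : Fin k, d' (f (r i.castSucc)) (f (r i.succ)) } := by
  have hdtri : ∀ x ∈ Set.Icc (0:ℝ) 1, ∀ y ∈ Set.Icc (0:ℝ) 1, ∀ z ∈ Set.Icc (0:ℝ) 1,
      dist (f x) (f z) ≤ dist (f x) (f y) + dist (f y) (f z) :=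
    fun x _ y _ z _ => dist_triangle _ _ _
  have hd'tri : ∀ x ∈ Set.Icc (0:ℝ) 1, ∀ y ∈ Set.Icc (0:ℝ) 1, ∀ z ∈ Set.Icc (0:ℝ) 1,
      d' (f x) (f z) ≤ d' (f x) (f y) + d' (f y) (f z) :=
    fun x hx y hy z hz => htri _ (hfS x hx) _ (hfS y hy) _ (hfS z hz)
  apply csSup_eq_csSup_of_forall_exists_le
  · rintro L ⟨k, r, hmono, hIcc, h0, h1, rfl⟩
    obtain ⟨k', s, hsmono, hsIcc, hs0, hs1, hmesh, hsum⟩ :=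
      refine_partition (fun x y => dist x y) f hdtri ε hε k r hmono hIcc h0 h1
    have heq : ∑ i : Fin k', dist (f (s i.castSucc)) (f (s i.succ)) =
        ∑ i : Fin k', d' (f (s i.castSucc)) (f (s i.succ)) :=
      Finset.sum_congr rfl (fun i _ =>
        hloc _ (hsIcc _) _ (hsIcc _) (hmesh i))
    exact ⟨_, ⟨k', s, hsmono, hsIcc, hs0, hs1, rfl⟩, by rw [← heq]; exact hsum⟩
  · rintro L ⟨k, r, hmono, hIcc, h0, h1, rfl⟩
    obtain ⟨k', s, hsmono, hsIcc, hs0, hs1, hmesh, hsum⟩ :=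
      refine_partition d' f hd'tri ε hε k r hmono hIcc h0 h1
    have heq : ∑ i : Fin k', dist (f (s i.castSucc)) (f (s i.succ)) =
        ∑ i : Fin k', d' (f (s i.castSucc)) (f (s i.succ)) :=
      Finset.sum_congr rfl (fun i _ =>
        hloc _ (hsIcc _) _ (hsIcc _) (hmesh i))
    exact ⟨_, ⟨k', s, hsmono, hsIcc, hs0, hs1, rfl⟩, by rw [heq]; exact hsum⟩

/-- If two (pseudo-)metrics agree on pairs of points of the path at parameter
distance less than `ε`, then the corresponding lengths of the path coincide. -/
theorem length_eq_of_locally_eq {E : Type*} [MetricSpace E] (S : Set E)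
    (d' : E → E → ℝ)
    (hnonneg : ∀ x ∈ S, ∀ y ∈ S, 0 ≤ d' x y)
    (hsymm : ∀ x ∈ S, ∀ y ∈ S, d' x y = d' y x)
    (htri : ∀ x ∈ S, ∀ y ∈ S, ∀ z ∈ S, d' x z ≤ d' x y + d' y z)
    (hle : ∀ x ∈ S, ∀ y ∈ S, dist x y ≤ d' x y)
    (f : ℝ → E) (hf : ContinuousOn f (Set.Icc 0 1))
    (hfS : ∀ r ∈ Set.Icc (0:ℝ) 1, f r ∈ S)
    (ε : ℝ) (hε : 0 < ε)
    (hloc : ∀ r ∈ Set.Icc (0:ℝ) 1, ∀ r' ∈ Set.Icc (0:ℝ) 1, |r - r'| < ε →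
      dist (f r) (f r') = d' (f r) (f r')) :
    pathLength (fun x y => dist x y) f = pathLength d' f := by
  unfold pathLength
  exact length_eq_of_locally_eq' S d' hnonneg hsymm htri hle f hf hfS ε hε hloc
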